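/- For each l ≥ 1, let 𝒯_l := {(s, t) ∈ 2^l × 2^l : s ≠ t and (N_s × N_t) ∩ 𝔾₀ ≠ ∅}, where 𝔾₀ := {(s_n 0 γ, s_n 1 γ) : n ∈ ω, γ ∈ 2^ω}. Then s(𝒯_l) is a connected acyclic graph on 2^l. -/

import Mathlib

/-- The symmetrization `s(A) = A ∪ A⁻¹` of a relation. -/
def symRel {X : Type*} (A : Set (X × X)) : Set (X × X) := A ∪ {p | (p.2, p.1) ∈ A}

/-- A symmetric relation `S` is acyclic if there is no injective cycle of length at least 3. -/
def Acyclic {X : Type*} (S : Set (X × X)) : Prop :=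
  ¬ ∃ (n : ℕ) (x : Fin (n + 1) → X), 2 ≤ n ∧ Function.Injective x ∧
      (∀ i : Fin n, (x i.castSucc, x i.succ) ∈ S) ∧ (x (Fin.last n), x 0) ∈ S

/-- A relation `G` is connected if any two points are joined by a `G`-path. -/
def Connected {X : Type*} (G : Set (X × X)) : Prop :=
  ∀ x y : X, ∃ (n : ℕ) (p : Fin (n + 1) → X), p 0 = x ∧ p (Fin.last n) = y ∧
    ∀ i : Fin n, (p i.castSucc, p i.succ) ∈ G

/-- The point of Cantor space obtained by concatenating a finite sequence `u`
with an infinite sequence `γ`. -/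
def catSeq (u : List Bool) (γ : ℕ → Bool) : ℕ → Bool := fun k =>
  if h : k < u.length then u.get ⟨k, h⟩ else γ (k - u.length)

/-- The relation `𝔾₀` on Cantor space associated with the sequence `s`. -/
def G0 (s : ℕ → List Bool) : Set ((ℕ → Bool) × (ℕ → Bool)) :=
  {p | ∃ (n : ℕ) (γ : ℕ → Bool),
    p = (catSeq (s n ++ [false]) γ, catSeq (s n ++ [true]) γ)}

/-- The basic clopen set `N_u` of extensions of the finite sequence `u : 2^l`. -/
def NBasic {l : ℕ} (u : Fin l → Bool) : Set (ℕ → Bool) := {α | ∀ i : Fin l, α i = u i}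

/-- The `l`-th level `𝒯_l` of the tree associated with `𝔾₀`. -/
def Tlevel (s : ℕ → List Bool) (l : ℕ) : Set ((Fin l → Bool) × (Fin l → Bool)) :=
  {q | q.1 ≠ q.2 ∧ ∃ p ∈ G0 s, p.1 ∈ NBasic q.1 ∧ p.2 ∈ NBasic q.2}

/-! ### Auxiliary definitions and lemmas -/

/-- The concrete description of a (directed) edge of `Tlevel` at coordinate `n`. -/
def EdgeAt (s : ℕ → List Bool) {l : ℕ} (n : Fin l) (u v : Fin l → Bool) : Prop :=
  (∀ i : Fin l, (i : ℕ) < (n : ℕ) → u i = (s (n : ℕ)).getD (i : ℕ) false) ∧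
    u n = false ∧ v n = true ∧ ∀ i : Fin l, i ≠ n → u i = v i

/-- The concrete description of an undirected edge of `symRel (Tlevel)`. -/
def Flip (s : ℕ → List Bool) {l : ℕ} (n : Fin l) (u v : Fin l → Bool) : Prop :=
  (∀ i : Fin l, (i : ℕ) < (n : ℕ) → u i = (s (n : ℕ)).getD (i : ℕ) false) ∧
    u n ≠ v n ∧ ∀ i : Fin l, i ≠ n → u i = v i

lemma catSeq_lt (u : List Bool) (γ : ℕ → Bool) {k : ℕ} (h : k < u.length) :
    catSeq u γ k = u.getD k false := by
  simp only [catSeq, dif_pos h, List.get_eq_getElem]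
  rw [List.getD_eq_getElem _ _ h]

lemma catSeq_ge (u : List Bool) (γ : ℕ → Bool) {k : ℕ} (h : ¬ k < u.length) :
    catSeq u γ k = γ (k - u.length) := by
  simp only [catSeq, dif_neg h]

lemma getD_append_lt (L : List Bool) (b : Bool) {n : ℕ} (h : n < L.length) :
    (L ++ [b]).getD n false = L.getD n false := by
  rw [List.getD_eq_getElem _ _ (by simp; omega), List.getD_eq_getElem _ _ h,
    List.getElem_append_left]

lemma getD_append_len (L : List Bool) (b : Bool) {n : ℕ} (h : n = L.length) :
    (L ++ [b]).getD n false = b := by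
  subst h
  rw [List.getD_eq_getElem _ _ (by simp)]
  exact List.getElem_concat_length rfl _

lemma mem_Tlevel_iff {s : ℕ → List Bool} (hlen : ∀ n, (s n).length = n) {l : ℕ}
    (u v : Fin l → Bool) :
    (u, v) ∈ Tlevel s l ↔ ∃ n : Fin l, EdgeAt s n u v := by
  constructor
  · rintro ⟨hne, p, ⟨nn, γ, rfl⟩, h1, h2⟩
    simp only [NBasic, Set.mem_setOf_eq] at h1 h2
    have hlf : (s nn ++ [false]).length = nn + 1 := by simp [hlen]
    have hlt : (s nn ++ [true]).length = nn + 1 := by simp [hlen]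
    by_cases hnl : nn < l
    · refine ⟨⟨nn, hnl⟩, ?_, ?_, ?_, ?_⟩
      · intro i hi
        rw [← h1 i, catSeq_lt (s nn ++ [false]) _ (by rw [hlf]; exact Nat.lt_succ_of_lt hi),
          getD_append_lt _ _ (by rw [hlen]; exact hi)]
      · rw [← h1 ⟨nn, hnl⟩, catSeq_lt (s nn ++ [false]) _ (by simp only [hlf, Fin.val_mk]; omega),
          getD_append_len _ _ (by rw [hlen])]
      · rw [← h2 ⟨nn, hnl⟩, catSeq_lt (s nn ++ [true]) _ (by simp only [hlt, Fin.val_mk]; omega),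
          getD_append_len _ _ (by rw [hlen])]
      · intro i hi
        have hiv : (i : ℕ) ≠ nn := fun h => hi (Fin.ext h)
        rw [← h1 i, ← h2 i]
        rcases lt_or_gt_of_ne hiv with h | h
        · rw [catSeq_lt (s nn ++ [false]) _ (by rw [hlf]; omega),
            catSeq_lt (s nn ++ [true]) _ (by rw [hlt]; omega),
            getD_append_lt _ _ (by rw [hlen]; exact h), getD_append_lt _ _ (by rw [hlen]; exact h)]
        · rw [catSeq_ge (s nn ++ [false]) _ (by rw [hlf]; omega),
            catSeq_ge (s nn ++ [true]) _ (by rw [hlt]; omega), hlf, hlt]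
    · exfalso
      apply hne
      show u = v
      funext i
      have hi : (i : ℕ) < nn := lt_of_lt_of_le i.isLt (le_of_not_gt hnl)
      show u i = v i
      rw [← h1 i, ← h2 i, catSeq_lt (s nn ++ [false]) _ (by rw [hlf]; omega),
        catSeq_lt (s nn ++ [true]) _ (by rw [hlt]; omega),
        getD_append_lt _ _ (by rw [hlen]; exact hi), getD_append_lt _ _ (by rw [hlen]; exact hi)]
  · rintro ⟨n, hpre, hun, hvn, hoff⟩
    set γ : ℕ → Bool := fun k => if h : k + (n : ℕ) + 1 < l then u ⟨k + (n : ℕ) + 1, h⟩ else false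
      with hγ
    have hlf : (s (n : ℕ) ++ [false]).length = (n : ℕ) + 1 := by simp [hlen]
    have hlt : (s (n : ℕ) ++ [true]).length = (n : ℕ) + 1 := by simp [hlen]
    have key : ∀ (b : Bool) (w : Fin l → Bool), w n = b → (∀ i : Fin l, i ≠ n → u i = w i) →
        ∀ i : Fin l, catSeq (s (n : ℕ) ++ [b]) γ (i : ℕ) = w i := by
      intro b w hwn hwoff i
      have hlb : (s (n : ℕ) ++ [b]).length = (n : ℕ) + 1 := by simp [hlen]
      rcases lt_trichotomy (i : ℕ) (n : ℕ) with h | h | h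
      · rw [catSeq_lt (s (n : ℕ) ++ [b]) _ (by rw [hlb]; omega),
          getD_append_lt _ _ (by rw [hlen]; exact h), ← hpre i h]
        exact hwoff i (fun he => by rw [he] at h; exact lt_irrefl _ h)
      · have : i = n := Fin.ext h
        subst this
        rw [catSeq_lt (s (i : ℕ) ++ [b]) _ (by rw [hlb]; omega),
          getD_append_len _ _ (by rw [hlen]), hwn]
      · rw [catSeq_ge (s (n : ℕ) ++ [b]) _ (by rw [hlb]; omega), hlb, hγ]
        have hc : (i : ℕ) - ((n : ℕ) + 1) + (n : ℕ) + 1 = (i : ℕ) := by omega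
        simp only []
        rw [dif_pos (by rw [hc]; exact i.isLt)]
        rw [show (⟨(i : ℕ) - ((n : ℕ) + 1) + (n : ℕ) + 1, _⟩ : Fin l) = i from Fin.ext hc]
        exact hwoff i (fun he => by rw [he] at h; exact lt_irrefl _ h)
    refine ⟨?_, (catSeq (s (n : ℕ) ++ [false]) γ, catSeq (s (n : ℕ) ++ [true]) γ), ⟨(n : ℕ), γ, rfl⟩,
      ?_, ?_⟩
    · intro h
      have huv : u = v := h
      rw [huv, hvn] at hun
      exact Bool.noConfusion hun
    · exact key false u hun (fun _ _ => rfl)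
    · exact key true v hvn hoff

lemma flip_symm {s : ℕ → List Bool} {l : ℕ} {n : Fin l} {u v : Fin l → Bool}
    (h : Flip s n u v) : Flip s n v u := by
  obtain ⟨h1, h2, h3⟩ := h
  refine ⟨fun i hi => ?_, h2.symm, fun i hi => (h3 i hi).symm⟩
  rw [← h3 i (fun he => by rw [he] at hi; exact lt_irrefl _ hi)]
  exact h1 i hi

lemma symRel_flip {s : ℕ → List Bool} (hlen : ∀ n, (s n).length = n) {l : ℕ}
    {u v : Fin l → Bool} (h : (u, v) ∈ symRel (Tlevel s l)) :
    ∃ n : Fin l, Flip s n u v := by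
  rcases h with h | h
  · obtain ⟨n, h1, h2, h3, h4⟩ := (mem_Tlevel_iff hlen u v).mp h
    exact ⟨n, h1, by rw [h2, h3]; exact Bool.noConfusion, h4⟩
  · obtain ⟨n, h1, h2, h3, h4⟩ := (mem_Tlevel_iff hlen v u).mp h
    exact ⟨n, flip_symm ⟨h1, by rw [h2, h3]; exact Bool.noConfusion, h4⟩⟩

lemma edge_flipBit {s : ℕ → List Bool} (hlen : ∀ n, (s n).length = n) {l : ℕ}
    (u : Fin l → Bool) (n : Fin l)
    (hpre : ∀ i : Fin l, (i : ℕ) < (n : ℕ) → u i = (s (n : ℕ)).getD (i : ℕ) false) :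
    (u, Function.update u n (!u n)) ∈ symRel (Tlevel s l) := by
  cases hb : u n with
  | false =>
    left
    refine (mem_Tlevel_iff hlen _ _).mpr ⟨n, hpre, hb, ?_, fun i hi => ?_⟩
    · rw [Function.update_self]; rfl
    · rw [Function.update_of_ne hi]
  | true =>
    right
    show (Function.update u n (!true), u) ∈ Tlevel s l
    refine (mem_Tlevel_iff hlen _ _).mpr ⟨n, fun i hi => ?_, ?_, hb, fun i hi => ?_⟩
    · rw [Function.update_of_ne (fun he => by rw [he] at hi; exact lt_irrefl _ hi)]
      exact hpre i hi
    · rw [Function.update_self]; rfl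
    · rw [Function.update_of_ne hi]

open Fin.NatCast in
lemma walk_const {l n : ℕ} (x : Fin (n + 1) → Fin l → Bool) (c : Fin (n + 1) → Fin l)
    (hoff : ∀ k, ∀ i : Fin l, i ≠ c k → x k i = x (k + 1) i) :
    ∀ (d : ℕ) (a : Fin (n + 1)) (i : Fin l), (∀ e : ℕ, e < d → i ≠ c (a + (e : Fin (n + 1)))) →
      x (a + (d : Fin (n + 1))) i = x a i := by
  intro d
  induction d with
  | zero => intro a i _; norm_num
  | succ d ih =>
    intro a i hi
    have h1 : a + ((d + 1 : ℕ) : Fin (n + 1)) = (a + (d : ℕ)) + 1 := by push_cast; abel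
    rw [h1, ← hoff (a + (d : ℕ)) i (hi d (Nat.lt_succ_self d))]
    exact ih a i (fun e he => hi e (he.trans (Nat.lt_succ_self d)))

lemma reach_of_agree {s : ℕ → List Bool} (hlen : ∀ n, (s n).length = n) {l : ℕ} :
    ∀ m : ℕ, m ≤ l → ∀ u v : Fin l → Bool, (∀ i : Fin l, m ≤ (i : ℕ) → u i = v i) →
      Relation.ReflTransGen (fun a b => (a, b) ∈ symRel (Tlevel s l)) u v := by
  intro m
  induction m with
  | zero =>
    intro _ u v h
    rw [show u = v from funext fun i => h i (Nat.zero_le _)]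
  | succ m ih =>
    intro hml u v h
    have hm : m < l := hml
    set nm : Fin l := ⟨m, hm⟩ with hnm
    set w : Fin l → Bool := fun i => if (i : ℕ) < m then (s m).getD (i : ℕ) false else u i with hw
    set w' : Fin l → Bool := fun i => if (i : ℕ) < m then (s m).getD (i : ℕ) false else v i
      with hw'
    have r1 : Relation.ReflTransGen (fun a b => (a, b) ∈ symRel (Tlevel s l)) u w :=
      ih (le_of_lt hm) u w (fun i hi => by
        rw [hw]; simp only []; rw [if_neg (not_lt.mpr hi)])
    have r2 : Relation.ReflTransGen (fun a b => (a, b) ∈ symRel (Tlevel s l)) w' v :=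
      ih (le_of_lt hm) w' v (fun i hi => by
        rw [hw']; simp only []; rw [if_neg (not_lt.mpr hi)])
    by_cases hum : u nm = v nm
    · have hww : w = w' := by
        funext i
        rw [hw, hw']; simp only []
        by_cases hi : (i : ℕ) < m
        · rw [if_pos hi, if_pos hi]
        · rw [if_neg hi, if_neg hi]
          rcases Nat.lt_or_ge (i : ℕ) (m + 1) with h' | h'
          · have : i = nm := Fin.ext (by show (i : ℕ) = m; omega)
            rw [this]; exact hum
          · exact h i h'
      exact Relation.ReflTransGen.trans r1 (hww ▸ r2)
    · have hpre : ∀ i : Fin l, (i : ℕ) < (nm : ℕ) → w i = (s (nm : ℕ)).getD (i : ℕ) false := by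
        intro i hi
        rw [hw]; simp only []; rw [if_pos hi]
      have hstep : (w, w') ∈ symRel (Tlevel s l) := by
        have hupd : w' = Function.update w nm (!w nm) := by
          funext i
          by_cases hi : i = nm
          · subst hi
            rw [Function.update_self]
            have e1 : w nm = u nm := by
              show (if ((nm : ℕ) < m) then (s m).getD ((nm : ℕ)) false else u nm) = u nm
              rw [if_neg (show ¬((nm : ℕ) < m) from Nat.lt_irrefl m)]
            have e2 : w' nm = v nm := by
              show (if ((nm : ℕ) < m) then (s m).getD ((nm : ℕ)) false else v nm) = v nm
              rw [if_neg (show ¬((nm : ℕ) < m) from Nat.lt_irrefl m)]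
            rw [e1, e2]
            revert hum
            cases (u nm) <;> cases (v nm) <;> simp
          · rw [Function.update_of_ne hi, hw, hw']; simp only []
            by_cases hi' : (i : ℕ) < m
            · rw [if_pos hi', if_pos hi']
            · rw [if_neg hi', if_neg hi']
              have : (i : ℕ) ≠ m := fun he => hi (Fin.ext he)
              exact (h i (by omega)).symm
        rw [hupd]
        exact edge_flipBit hlen w nm hpre
      exact Relation.ReflTransGen.trans r1
        (Relation.ReflTransGen.trans (Relation.ReflTransGen.single hstep) r2)

lemma reach_to_path {X : Type*} {R : X → X → Prop} {x y : X} (h : Relation.ReflTransGen R x y) :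
    ∃ (n : ℕ) (p : Fin (n + 1) → X), p 0 = x ∧ p (Fin.last n) = y ∧
      ∀ i : Fin n, R (p i.castSucc) (p i.succ) := by
  induction h with
  | refl => exact ⟨0, fun _ => x, rfl, rfl, fun i => i.elim0⟩
  | @tail b c hab hbc ih =>
    obtain ⟨n, p, h0, hl, hs⟩ := ih
    refine ⟨n + 1, Fin.snoc p c, ?_, ?_, ?_⟩
    · rw [show (0 : Fin (n + 2)) = Fin.castSucc 0 from rfl, Fin.snoc_castSucc]; exact h0
    · rw [Fin.snoc_last]
    · intro i
      refine Fin.lastCases ?_ ?_ i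
      · rw [Fin.succ_last, Fin.snoc_last, Fin.snoc_castSucc, hl]
        exact hbc
      · intro j
        rw [Fin.succ_castSucc, Fin.snoc_castSucc, Fin.snoc_castSucc]
        exact hs j

open Fin.NatCast in
theorem stmt7 (s : ℕ → List Bool) (hlen : ∀ n, (s n).length = n)
    (hdense : ∀ t : List Bool, ∃ n, t <+: s n)
    (l : ℕ) (hl : 1 ≤ l) :
    (∀ u : Fin l → Bool, (u, u) ∉ symRel (Tlevel s l)) ∧
    Acyclic (symRel (Tlevel s l)) ∧ Connected (symRel (Tlevel s l)) := by
  refine ⟨?_, ?_, ?_⟩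
  · intro u hu
    obtain ⟨n, h⟩ := symRel_flip hlen hu
    exact h.2.1 rfl
  · rintro ⟨n, x, hn2, hinj, hstep, hlastE⟩
    have hadj : ∀ k : Fin (n + 1), (x k, x (k + 1)) ∈ symRel (Tlevel s l) := by
      intro k
      by_cases hk : k = Fin.last n
      · subst hk
        rw [Fin.last_add_one]
        exact hlastE
      · have hkv : (k : ℕ) < n := Fin.val_lt_last hk
        have h1 : k = (⟨(k : ℕ), hkv⟩ : Fin n).castSucc := by ext; simp
        have h2 : k + 1 = (⟨(k : ℕ), hkv⟩ : Fin n).succ := by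
          ext
          rw [Fin.val_add_one, if_neg hk]
          simp
        have := hstep ⟨(k : ℕ), hkv⟩
        rwa [← h1, ← h2] at this
    choose c hc using fun k => symRel_flip hlen (hadj k)
    have hoff : ∀ k, ∀ i : Fin l, i ≠ c k → x k i = x (k + 1) i := fun k i h => (hc k).2.2 i h
    have hneq : ∀ k, x k (c k) ≠ x (k + 1) (c k) := fun k => (hc k).2.1
    have hpre : ∀ k, ∀ i : Fin l, (i : ℕ) < ((c k) : ℕ) →
        x k i = (s ((c k) : ℕ)).getD (i : ℕ) false := fun k => (hc k).1
    obtain ⟨k0, -, hmax'⟩ := Finset.exists_max_image (Finset.univ : Finset (Fin (n + 1))) c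
      ⟨0, Finset.mem_univ 0⟩
    have hmax : ∀ k, ((c k) : ℕ) ≤ ((c k0) : ℕ) := fun k => hmax' k (Finset.mem_univ k)
    set m := c k0 with hm
    have hhigh : ∀ k : Fin (n + 1), ∀ i : Fin l, (m : ℕ) < (i : ℕ) → x k i = x 0 i := by
      intro k i hi
      have hcon := walk_const x c hoff (k : ℕ) 0 i (fun e _ heq =>
        absurd (lt_of_lt_of_le (heq ▸ hi) (hmax _)) (lt_irrefl _))
      rw [zero_add, Fin.cast_val_eq_self] at hcon
      exact hcon
    have hP : ∃ t : ℕ, 0 < t ∧ c (k0 + (t : Fin (n + 1))) = m := by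
      refine ⟨n + 1, Nat.succ_pos n, ?_⟩
      rw [show ((n + 1 : ℕ) : Fin (n + 1)) = 0 from Fin.natCast_self (n + 1), add_zero]
    set t := Nat.find hP with ht
    obtain ⟨htpos, hct⟩ := Nat.find_spec hP
    have hmin : ∀ e : ℕ, 0 < e → e < t → c (k0 + (e : Fin (n + 1))) ≠ m :=
      fun e he1 he2 hee => Nat.find_min hP he2 ⟨he1, hee⟩
    have hbitm : x (k0 + (t : Fin (n + 1))) m = x (k0 + 1) m := by
      have harith : k0 + (t : Fin (n + 1)) = (k0 + 1) + ((t - 1 : ℕ) : Fin (n + 1)) := by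
        have h1 : ((t : ℕ) : Fin (n + 1)) = ((t - 1 : ℕ) : Fin (n + 1)) + 1 := by
          conv_lhs => rw [show t = (t - 1) + 1 from (Nat.succ_pred_eq_of_pos htpos).symm]
          push_cast
          ring
        rw [h1]
        abel
      rw [harith]
      refine walk_const x c hoff (t - 1) (k0 + 1) m (fun e he heq2 => ?_)
      have harith2 : (k0 + 1) + (e : Fin (n + 1)) = k0 + ((e + 1 : ℕ) : Fin (n + 1)) := by
        push_cast
        abel
      rw [harith2] at heq2
      exact hmin (e + 1) (Nat.succ_pos e) (by omega) heq2.symm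
    have heq : x (k0 + 1) = x (k0 + (t : Fin (n + 1))) := by
      funext i
      rcases lt_trichotomy (i : ℕ) ((m : Fin l) : ℕ) with hi | hi | hi
      · have e1 : x (k0 + 1) i = x k0 i :=
          (hoff k0 i (by rw [← hm]; exact Fin.ne_of_val_ne (Nat.ne_of_lt hi))).symm
        have e2 : x k0 i = (s ((m : Fin l) : ℕ)).getD (i : ℕ) false := by
          have := hpre k0 i (by rw [← hm]; exact hi)
          rw [← hm] at this
          exact this
        have e3 : x (k0 + (t : Fin (n + 1))) i = (s ((m : Fin l) : ℕ)).getD (i : ℕ) false := by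
          have := hpre (k0 + (t : Fin (n + 1))) i (by rw [hct]; exact hi)
          rw [hct] at this
          exact this
        rw [e1, e2, e3]
      · rw [show i = m from Fin.ext hi]
        exact hbitm.symm
      · rw [hhigh (k0 + 1) i hi, hhigh (k0 + (t : Fin (n + 1))) i hi]
    have h1t : (1 : Fin (n + 1)) = (t : Fin (n + 1)) := add_left_cancel (hinj heq)
    have hct1 : c (k0 + 1) = m := by rw [h1t]; exact hct
    have heq2 : x (k0 + 1 + 1) = x k0 := by
      funext i
      by_cases hi : i = m
      · subst hi
        have a1 : x k0 m ≠ x (k0 + 1) m := by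
          have := hneq k0
          rw [← hm] at this
          exact this
        have a2 : x (k0 + 1) m ≠ x (k0 + 1 + 1) m := by
          have := hneq (k0 + 1)
          rw [hct1] at this
          exact this
        revert a1 a2
        cases (x k0 m) <;> cases (x (k0 + 1) m) <;> cases (x (k0 + 1 + 1) m) <;> simp
      · have b2 : x k0 i = x (k0 + 1) i := hoff k0 i (by rw [← hm]; exact hi)
        have b1 : x (k0 + 1) i = x (k0 + 1 + 1) i := hoff (k0 + 1) i (by rw [hct1]; exact hi)
        rw [← b1, ← b2]
    have hkk : k0 + (1 + 1) = k0 + 0 := by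
      rw [← add_assoc, add_zero]
      exact hinj heq2
    have h20 : (1 + 1 : Fin (n + 1)) = 0 := add_left_cancel hkk
    have hv := congrArg Fin.val h20
    have e1 : (1 : ℕ) % (n + 1) = 1 := Nat.mod_eq_of_lt (by omega)
    rw [Fin.val_add, Fin.val_one', Fin.val_zero, e1] at hv
    rw [Nat.mod_eq_of_lt (by omega : 1 + 1 < n + 1)] at hv
    omega
  · intro a b
    obtain ⟨n, p, h0, hl', hs⟩ := reach_to_path (reach_of_agree hlen l le_rfl a b
      (fun i hi => absurd i.isLt (not_lt.mpr hi)))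
    exact ⟨n, p, h0, hl', hs⟩
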